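/- For every Λ ∈ ℝ and all real parameters z, z', each of the three elements r_I = z(K_1∧K_2 + K_1∧J_3 − K_3∧J_1 − J_1∧J_2) − z'(K_2∧K_3 − K_2∧J_2 − K_3∧J_3 + J_2∧J_3), r_II = z K_1∧J_1, and r_III = z(K_1∧K_2 + K_1∧J_3) of g_Λ ∧ g_Λ satisfies the classical Yang–Baxter equation, i.e. [[r,r]] = 0 in g_Λ⊗g_Λ⊗g_Λ. -/

import Mathlib

namespace NCST

noncomputable section

/-- The underlying 10-dimensional vector space of `g_Λ`, with basis indices
`0,1,2,3 ↦ P_0,P_1,P_2,P_3`, `4,5,6 ↦ K_1,K_2,K_3`, `7,8,9 ↦ J_1,J_2,J_3`. -/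
abbrev V : Type := Fin 10 → ℝ

/-- The `i`-th basis vector. -/
def e (i : Fin 10) : V := Pi.single i 1

/-- The Levi-Civita symbol on `{1,2,3}` (indices shifted to `Fin 3`), `ε_{123} = 1`. -/
def eps (a b c : Fin 3) : ℝ :=
  if (a = 0 ∧ b = 1 ∧ c = 2) ∨ (a = 1 ∧ b = 2 ∧ c = 0) ∨ (a = 2 ∧ b = 0 ∧ c = 1) then 1
  else if (a = 2 ∧ b = 1 ∧ c = 0) ∨ (a = 1 ∧ b = 0 ∧ c = 2) ∨ (a = 0 ∧ b = 2 ∧ c = 1) then -1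
  else 0

/-- Translation generators `P_μ`, `μ = 0,1,2,3`. -/
def Pv (μ : Fin 4) : V := e ⟨μ.1, by have := μ.isLt; omega⟩
/-- Boost generators `K_a`, `a = 1,2,3` (index `a+1` in `Fin 3`-terms). -/
def Kv (a : Fin 3) : V := e ⟨a.1 + 4, by have := a.isLt; omega⟩
/-- Rotation generators `J_a`, `a = 1,2,3`. -/
def Jv (a : Fin 3) : V := e ⟨a.1 + 7, by have := a.isLt; omega⟩

/-- Labels for the kinematical basis generators. -/
inductive Gen : Type
  | P : Fin 4 → Gen
  | K : Fin 3 → Gen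
  | J : Fin 3 → Gen

/-- `[K_a, P_μ]`: equals `P_a` if `μ = 0` and `δ_{ab} P_0` if `μ = b ∈ {1,2,3}`. -/
def KPbra (a : Fin 3) (μ : Fin 4) : V :=
  if μ.1 = 0 then Pv ⟨a.1 + 1, by have := a.isLt; omega⟩
  else if μ.1 = a.1 + 1 then Pv 0 else 0

/-- `[J_a, P_μ]`: equals `0` if `μ = 0` and `ε_{abc} P_c` if `μ = b ∈ {1,2,3}`. -/
def JPbra (a : Fin 3) (μ : Fin 4) : V :=
  if h : μ.1 = 0 then 0
  else ∑ c : Fin 3, eps a ⟨μ.1 - 1, by have := μ.isLt; omega⟩ c •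
    Pv ⟨c.1 + 1, by have := c.isLt; omega⟩

/-- `[P_μ, P_ν]`: `[P_0,P_a] = -Λ K_a`, `[P_a,P_b] = Λ ε_{abc} J_c`. -/
def PPbra (Λ : ℝ) (μ ν : Fin 4) : V :=
  if _hμ : μ.1 = 0 then
    (if _hν : ν.1 = 0 then 0 else (-Λ) • Kv ⟨ν.1 - 1, by have := ν.isLt; omega⟩)
  else if _hν : ν.1 = 0 then Λ • Kv ⟨μ.1 - 1, by have := μ.isLt; omega⟩
  else Λ • ∑ c : Fin 3, eps ⟨μ.1 - 1, by have := μ.isLt; omega⟩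
    ⟨ν.1 - 1, by have := ν.isLt; omega⟩ c • Jv c

/-- `[K_a, K_b] = -ε_{abc} J_c`. -/
def KKbra (a b : Fin 3) : V := -∑ c : Fin 3, eps a b c • Jv c
/-- `[J_a, K_b] = ε_{abc} K_c`. -/
def JKbra (a b : Fin 3) : V := ∑ c : Fin 3, eps a b c • Kv c
/-- `[J_a, J_b] = ε_{abc} J_c`. -/
def JJbra (a b : Fin 3) : V := ∑ c : Fin 3, eps a b c • Jv c

/-- The bracket of two basis generators of `g_Λ`, as in eq. (1) of the paper. -/
def genBra (Λ : ℝ) : Gen → Gen → V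
  | .P μ, .P ν => PPbra Λ μ ν
  | .P μ, .K a => -KPbra a μ
  | .P μ, .J a => -JPbra a μ
  | .K a, .P μ => KPbra a μ
  | .K a, .K b => KKbra a b
  | .K a, .J b => -JKbra b a
  | .J a, .P μ => JPbra a μ
  | .J a, .K b => JKbra a b
  | .J a, .J b => JJbra a b

/-- Decoding of a `Fin 10` index into the corresponding generator label. -/
def idxGen (i : Fin 10) : Gen :=
  if h : i.1 < 4 then .P ⟨i.1, h⟩
  else if h2 : i.1 < 7 then .K ⟨i.1 - 4, by omega⟩
  else .J ⟨i.1 - 7, by have := i.isLt; omega⟩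

/-- The bracket of `g_Λ`, extended bilinearly from the structure constants. -/
def bra (Λ : ℝ) (x y : V) : V :=
  ∑ i : Fin 10, ∑ j : Fin 10, (x i * y j) • genBra Λ (idxGen i) (idxGen j)

/-- Coefficients of elements of `g_Λ ⊗ g_Λ` in the basis `e_i ⊗ e_j`. -/
abbrev T2 : Type := Fin 10 → Fin 10 → ℝ
/-- Coefficients of elements of `g_Λ ⊗ g_Λ ⊗ g_Λ`. -/
abbrev T3 : Type := Fin 10 → Fin 10 → Fin 10 → ℝ

/-- The diagonal adjoint action `X·(a⊗b) = [X,a]⊗b + a⊗[X,b]` on `g_Λ ⊗ g_Λ`,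
in coordinates; `adT Λ X r` is the cocommutator `δ_r(X)`. -/
def adT (Λ : ℝ) (X : V) (r : T2) : T2 :=
  fun k l => (∑ i : Fin 10, r i l * bra Λ X (e i) k) +
    ∑ j : Fin 10, r k j * bra Λ X (e j) l

/-- `x ∧ y := x ⊗ y - y ⊗ x`, in coordinates. -/
def wedge (x y : V) : T2 := fun i j => x i * y j - x j * y i

/-- The wedge `e_i ∧ e_j` of two basis vectors. -/
def wEl (i j : Fin 10) : T2 := wedge (e i) (e j)

/-- The Schouten bracket `[[r,r]]` of `r ∈ g_Λ ⊗ g_Λ`, in coordinates: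
`[[r,r]] = [r_{12},r_{13}] + [r_{12},r_{23}] + [r_{13},r_{23}]`, i.e. for
`r = Σ aᵢ⊗bᵢ`, `[[r,r]] = Σᵢⱼ ([aᵢ,aⱼ]⊗bᵢ⊗bⱼ + aᵢ⊗[bᵢ,aⱼ]⊗bⱼ + aᵢ⊗aⱼ⊗[bᵢ,bⱼ])`. -/
def schouten (Λ : ℝ) (r : T2) : T3 :=
  fun p q s =>
    ∑ i : Fin 10, ∑ j : Fin 10, ∑ k : Fin 10, ∑ l : Fin 10, r i j * r k l *
      (bra Λ (e i) (e k) p * (if j = q then (1:ℝ) else 0) * (if l = s then (1:ℝ) else 0)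
      + (if i = p then (1:ℝ) else 0) * bra Λ (e j) (e k) q * (if l = s then (1:ℝ) else 0)
      + (if i = p then (1:ℝ) else 0) * (if k = q then (1:ℝ) else 0) * bra Λ (e j) (e l) s)

/-- The diagonal adjoint action of `X ∈ g_Λ` on `g_Λ ⊗ g_Λ ⊗ g_Λ`, in coordinates. -/
def adT3 (Λ : ℝ) (X : V) (T : T3) : T3 :=
  fun p q s => (∑ i : Fin 10, T i q s * bra Λ X (e i) p)
    + (∑ j : Fin 10, T p j s * bra Λ X (e j) q)
    + ∑ k : Fin 10, T p q k * bra Λ X (e k) s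

/-- `r_I = z(K_1∧K_2 + K_1∧J_3 − K_3∧J_1 − J_1∧J_2)
        − z'(K_2∧K_3 − K_2∧J_2 − K_3∧J_3 + J_2∧J_3)`
(`K_1,K_2,K_3 = e_4,e_5,e_6`, `J_1,J_2,J_3 = e_7,e_8,e_9`). -/
def rI (z z' : ℝ) : T2 :=
  z • (wEl 4 5 + wEl 4 9 - wEl 6 7 - wEl 7 8)
    - z' • (wEl 5 6 - wEl 5 8 - wEl 6 9 + wEl 8 9)

/-- `r_II = z K_1∧J_1`. -/
def rII (z : ℝ) : T2 := z • wEl 4 7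

/-- `r_III = z(K_1∧K_2 + K_1∧J_3)`. -/
def rIII (z : ℝ) : T2 := z • (wEl 4 5 + wEl 4 9)

section AuxCYBE

variable (Λ z z' : ℝ)

lemma braE (i j : Fin 10) : bra Λ (e i) (e j) = genBra Λ (idxGen i) (idxGen j) := by
  funext p
  simp [bra, e, Pi.single_apply, apply_ite (fun f : V => f p), Finset.sum_ite_eq]

lemma schouten_apply (r : T2) (p q s : Fin 10) :
    schouten Λ r p q s = ∑ i : Fin 10, ∑ k : Fin 10,
      (r i q * r k s * bra Λ (e i) (e k) p + r p i * r k s * bra Λ (e i) (e k) q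
        + r p i * r q k * bra Λ (e i) (e k) s) := by
  simp only [schouten, mul_ite, mul_one, mul_zero, ite_mul, zero_mul, mul_add,
    Finset.sum_add_distrib, Finset.sum_ite_irrel, Finset.sum_const_zero,
    Finset.sum_ite_eq', Finset.mem_univ, if_true, one_mul]

lemma idx4 : idxGen 4 = Gen.K 0 := rfl
lemma idx5 : idxGen 5 = Gen.K 1 := rfl
lemma idx6 : idxGen 6 = Gen.K 2 := rfl
lemma idx7 : idxGen 7 = Gen.J 0 := rfl
lemma idx8 : idxGen 8 = Gen.J 1 := rfl
lemma idx9 : idxGen 9 = Gen.J 2 := rfl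
lemma Jv0 : Jv 0 = e 7 := rfl
lemma Jv1 : Jv 1 = e 8 := rfl
lemma Jv2 : Jv 2 = e 9 := rfl
lemma Kv0 : Kv 0 = e 4 := rfl
lemma Kv1 : Kv 1 = e 5 := rfl
lemma Kv2 : Kv 2 = e 6 := rfl

lemma sum10 (f : Fin 10 → ℝ) :
    ∑ i, f i = f 0 + f 1 + f 2 + f 3 + f 4 + f 5 + f 6 + f 7 + f 8 + f 9 := by
  simp [Fin.sum_univ_succ, add_assoc]

set_option maxHeartbeats 16000000 in
lemma rI_CYBE : schouten Λ (rI z z') = 0 := by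
  funext p q s
  simp only [schouten_apply, braE, sum10]
  simp only [rI, wEl, wedge, e, Pi.single_apply, Pi.smul_apply, smul_eq_mul, Pi.add_apply,
    Pi.sub_apply, Pi.neg_apply, Finset.sum_apply, Fin.sum_univ_three,
    idx4, idx5, idx6, idx7, idx8, idx9, genBra, KKbra, JKbra, JJbra, eps,
    Jv0, Jv1, Jv2, Kv0, Kv1, Kv2,
    Fin.reduceEq, if_true, if_false, and_true, true_and, and_false, false_and,
    or_false, false_or, or_true, true_or, ite_true, ite_false,
    mul_zero, zero_mul, mul_one, one_mul, add_zero, zero_add, neg_zero, sub_zero,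
    zero_sub, neg_neg, sub_self, zero_smul, one_smul, smul_zero, neg_smul, Pi.zero_apply]
  ring

set_option maxHeartbeats 16000000 in
lemma rII_CYBE : schouten Λ (rII z) = 0 := by
  funext p q s
  simp only [schouten_apply, braE, sum10]
  simp only [rII, wEl, wedge, e, Pi.single_apply, Pi.smul_apply, smul_eq_mul, Pi.add_apply,
    Pi.sub_apply, Pi.neg_apply, Finset.sum_apply, Fin.sum_univ_three,
    idx4, idx5, idx6, idx7, idx8, idx9, genBra, KKbra, JKbra, JJbra, eps,
    Jv0, Jv1, Jv2, Kv0, Kv1, Kv2,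
    Fin.reduceEq, if_true, if_false, and_true, true_and, and_false, false_and,
    or_false, false_or, or_true, true_or, ite_true, ite_false,
    mul_zero, zero_mul, mul_one, one_mul, add_zero, zero_add, neg_zero, sub_zero,
    zero_sub, neg_neg, sub_self, zero_smul, one_smul, smul_zero, neg_smul, Pi.zero_apply]

set_option maxHeartbeats 16000000 in
lemma rIII_CYBE : schouten Λ (rIII z) = 0 := by
  funext p q s
  simp only [schouten_apply, braE, sum10]
  simp only [rIII, wEl, wedge, e, Pi.single_apply, Pi.smul_apply, smul_eq_mul, Pi.add_apply,
    Pi.sub_apply, Pi.neg_apply, Finset.sum_apply, Fin.sum_univ_three,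
    idx4, idx5, idx6, idx7, idx8, idx9, genBra, KKbra, JKbra, JJbra, eps,
    Jv0, Jv1, Jv2, Kv0, Kv1, Kv2,
    Fin.reduceEq, if_true, if_false, and_true, true_and, and_false, false_and,
    or_false, false_or, or_true, true_or, ite_true, ite_false,
    mul_zero, zero_mul, mul_one, one_mul, add_zero, zero_add, neg_zero, sub_zero,
    zero_sub, neg_neg, sub_self, zero_smul, one_smul, smul_zero, neg_smul, Pi.zero_apply]
  ring

end AuxCYBE

/-- For every `Λ` and all parameters `z, z'`, the three classical
`r`-matrices `r_I`, `r_II`, `r_III` satisfy the classical Yang–Baxter equation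
`[[r,r]] = 0`. -/
theorem rI_rII_rIII_satisfy_CYBE (Λ z z' : ℝ) :
    schouten Λ (rI z z') = 0 ∧ schouten Λ (rII z) = 0 ∧ schouten Λ (rIII z) = 0 := by
  exact ⟨rI_CYBE Λ z z', rII_CYBE Λ z, rIII_CYBE Λ z⟩

end
end NCST
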